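/- arXiv:2006.12310 — 2 statements merged into one kernel-verified Lean document; each statement's English description precedes it below -/
import Mathlib

section
/- Let g, h ∈ R[λ] and let n be a positive integer such that g ≡ h^n mod (p,q−1)R[λ] and h^n ∉ (p,q−1)R[λ]. Then the image of g in R⟨λ,1/h⟩ is a unit, the image of h in R⟨λ,1/g⟩ is a unit, and the induced continuous R[λ]-algebra homomorphisms R⟨λ,1/g⟩ → R⟨λ,1/h⟩ and R⟨λ,1/h⟩ → R⟨λ,1/g⟩ are mutually inverse ring isomorphisms; in particular R⟨λ,1/g⟩ ≅ R⟨λ,1/h⟩. -/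
/- Setting (following Dwork-type q-congruences / q-hypergeometric papers):
`p` is an odd prime, `R = ℤ_p[[q−1]]` is implemented as `PowerSeries ℤ_[p]`, the power-series
variable `PowerSeries.X` standing for `q − 1`. -/

noncomputable section
open PowerSeries

namespace QDworkAux

open AdicCompletion

variable {S : Type*} [CommRing S] (I : Ideal S)

lemma smul_top_pow (n : ℕ) : (I ^ n • ⊤ : Ideal S) = I ^ n := by
  ext x; simp

/-- Evaluation at level `n` as a ring hom. -/
def evalRing (n : ℕ) : AdicCompletion I S →+* S ⧸ (I ^ n • ⊤ : Ideal S) where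
  toFun x := x.val n
  map_one' := rfl
  map_mul' _ _ := rfl
  map_zero' := rfl
  map_add' _ _ := rfl

lemma isUnit_val (x : AdicCompletion I S) (hx : IsUnit (x.val 1)) (n : ℕ) :
    IsUnit (x.val n) := by
  rcases Nat.eq_zero_or_pos n with rfl | hn
  · refine IsUnit.of_mul_eq_one 0 ?_
    have h1 : (1 : S ⧸ (I ^ 0 • ⊤ : Ideal S)) = 0 := by
      rw [← map_one (Ideal.Quotient.mk (I ^ 0 • ⊤ : Ideal S)),
        Ideal.Quotient.eq_zero_iff_mem, smul_top_pow]
      simp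
    rw [mul_zero, h1]
  · obtain ⟨z, hz⟩ := Ideal.Quotient.mk_surjective (x.val n)
    have h1 : Ideal.Quotient.mk (I ^ 1 • ⊤ : Ideal S) z = x.val 1 := by
      rw [← x.property hn, ← hz]; rfl
    have hu : IsUnit (Ideal.Quotient.mk (I ^ 1 • ⊤ : Ideal S) z) := h1 ▸ hx
    obtain ⟨w, hw⟩ := Ideal.Quotient.mk_surjective
      (↑hu.unit⁻¹ : S ⧸ (I ^ 1 • ⊤ : Ideal S))
    have hzw : Ideal.Quotient.mk (I ^ 1 • ⊤ : Ideal S) (z * w) = 1 := by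
      rw [map_mul, hw]
      exact hu.mul_val_inv
    set e := 1 - z * w with he_def
    have he : e ∈ I := by
      have h0 : Ideal.Quotient.mk (I ^ 1 • ⊤ : Ideal S) e = 0 := by
        rw [he_def, map_sub, map_one, hzw, sub_self]
      have h2 := Ideal.Quotient.eq_zero_iff_mem.mp h0
      rwa [smul_top_pow, pow_one] at h2
    have hgeom : (1 - e) * (∑ i ∈ Finset.range n, e ^ i) = 1 - e ^ n := by
      have h3 := geom_sum_mul e n
      linear_combination -h3
    have key : z * (w * ∑ i ∈ Finset.range n, e ^ i) = 1 - e ^ n := by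
      rw [← mul_assoc, show z * w = 1 - e by rw [he_def]; ring]
      exact hgeom
    have hen : e ^ n ∈ (I ^ n • ⊤ : Ideal S) := by
      rw [smul_top_pow]; exact Ideal.pow_mem_pow he n
    refine IsUnit.of_mul_eq_one
      (Ideal.Quotient.mk (I ^ n • ⊤ : Ideal S) (w * ∑ i ∈ Finset.range n, e ^ i)) ?_
    rw [← hz, ← map_mul, key, map_sub, map_one, Ideal.Quotient.eq_zero_iff_mem.mpr hen,
      sub_zero]

lemma isUnit_of_isUnit_val_one (x : AdicCompletion I S) (hx : IsUnit (x.val 1)) :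
    IsUnit x := by
  have h : ∀ n, IsUnit (x.val n) := isUnit_val I x hx
  refine IsUnit.of_mul_eq_one (a := x) (⟨fun n => ↑(h n).unit⁻¹, ?_⟩ : AdicCompletion I S) ?_
  · intro m n hmn
    have l1 : x.val m * transitionMap I S hmn (↑(h n).unit⁻¹) = 1 := by
      rw [← x.property hmn, ← transitionMap_map_mul, (h n).mul_val_inv]
      exact transitionMap_map_one I hmn
    have l2 : x.val m * ↑(h m).unit⁻¹ = 1 := (h m).mul_val_inv
    exact (h m).mul_left_cancel (l1.trans l2.symm)
  · apply AdicCompletion.ext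
    intro n
    exact (AdicCompletion.val_mul (I := I) n x _).trans
      ((h n).mul_val_inv.trans (AdicCompletion.val_one (I := I) n).symm)

variable {T : Type*} [CommRing T] (K : Ideal T)

lemma val_algebraMap (t : T) (n : ℕ) :
    (algebraMap T (AdicCompletion K T) t).val n
      = Ideal.Quotient.mk (K ^ n • ⊤ : Ideal T) t := rfl

variable (φ : S →+* AdicCompletion K T)

lemma kills (hφ : Ideal.map φ I ≤ Ideal.map (algebraMap T (AdicCompletion K T)) K)
    (n : ℕ) : ∀ s ∈ (I ^ n • ⊤ : Ideal S), ((evalRing K n).comp φ) s = 0 := by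
  intro s hs
  rw [smul_top_pow] at hs
  have h1 : ((evalRing K n).comp φ) s ∈ Ideal.map ((evalRing K n).comp φ) (I ^ n) :=
    Ideal.mem_map_of_mem _ hs
  rw [Ideal.map_pow] at h1
  have hco : (evalRing K n).comp (algebraMap T (AdicCompletion K T))
      = Ideal.Quotient.mk (K ^ n • ⊤ : Ideal T) :=
    RingHom.ext fun t => val_algebraMap K t n
  have h2 : Ideal.map ((evalRing K n).comp φ) I
      ≤ Ideal.map (Ideal.Quotient.mk (K ^ n • ⊤ : Ideal T)) K := by
    rw [← Ideal.map_map]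
    refine le_trans (Ideal.map_mono hφ) ?_
    rw [Ideal.map_map, hco]
  have h3 : (Ideal.map (Ideal.Quotient.mk (K ^ n • ⊤ : Ideal T)) K) ^ n ≤ ⊥ := by
    rw [← Ideal.map_pow]
    refine le_trans (Ideal.map_mono ?_) (le_of_eq (Ideal.map_quotient_self _))
    rw [smul_top_pow]
  have h4 := h3 (Ideal.pow_right_mono h2 n h1)
  simpa using h4

/-- Extension of a ring hom `S →+* AdicCompletion K T` mapping `I` into the "completed" `K`
to the adic completion of `S`. -/
def extendHom (hφ : Ideal.map φ I ≤ Ideal.map (algebraMap T (AdicCompletion K T)) K) :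
    AdicCompletion I S →+* AdicCompletion K T where
  toFun x := ⟨fun n => Ideal.Quotient.lift (I ^ n • ⊤ : Ideal S) ((evalRing K n).comp φ)
      (kills I K φ hφ n) (x.val n), by
    intro m n hmn
    obtain ⟨s, hs⟩ := Ideal.Quotient.mk_surjective (x.val n)
    show transitionMap K T hmn (Ideal.Quotient.lift (I ^ n • ⊤ : Ideal S)
        ((evalRing K n).comp φ) (kills I K φ hφ n) (x.val n))
      = Ideal.Quotient.lift (I ^ m • ⊤ : Ideal S)
        ((evalRing K m).comp φ) (kills I K φ hφ m) (x.val m)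
    have hm : x.val m = Ideal.Quotient.mk (I ^ m • ⊤ : Ideal S) s := by
      rw [← x.property hmn, ← hs]; rfl
    rw [← hs, hm, Ideal.Quotient.lift_mk, Ideal.Quotient.lift_mk]
    exact (φ s).property hmn⟩
  map_one' := AdicCompletion.ext fun n => by
    show Ideal.Quotient.lift _ _ _ ((1 : AdicCompletion I S).val n)
      = (1 : AdicCompletion K T).val n
    rw [val_one, val_one, _root_.map_one]
  map_mul' x y := AdicCompletion.ext fun n => by
    show Ideal.Quotient.lift (I ^ n • ⊤ : Ideal S) ((evalRing K n).comp φ) (kills I K φ hφ n) ((x * y).val n)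
      = Ideal.Quotient.lift (I ^ n • ⊤ : Ideal S) ((evalRing K n).comp φ) (kills I K φ hφ n) (x.val n) * Ideal.Quotient.lift (I ^ n • ⊤ : Ideal S) ((evalRing K n).comp φ) (kills I K φ hφ n) (y.val n)
    rw [val_mul, _root_.map_mul]
  map_zero' := AdicCompletion.ext fun n => by
    show Ideal.Quotient.lift _ _ _ ((0 : AdicCompletion I S).val n)
      = (0 : AdicCompletion K T).val n
    rw [val_zero_apply, val_zero_apply, _root_.map_zero]
  map_add' x y := AdicCompletion.ext fun n => by
    show Ideal.Quotient.lift (I ^ n • ⊤ : Ideal S) ((evalRing K n).comp φ) (kills I K φ hφ n) ((x + y).val n)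
      = Ideal.Quotient.lift (I ^ n • ⊤ : Ideal S) ((evalRing K n).comp φ) (kills I K φ hφ n) (x.val n) + Ideal.Quotient.lift (I ^ n • ⊤ : Ideal S) ((evalRing K n).comp φ) (kills I K φ hφ n) (y.val n)
    rw [val_add_apply, _root_.map_add]

lemma extendHom_val (hφ : Ideal.map φ I ≤ Ideal.map (algebraMap T (AdicCompletion K T)) K)
    (x : AdicCompletion I S) (n : ℕ) :
    (extendHom I K φ hφ x).val n
      = Ideal.Quotient.lift (I ^ n • ⊤ : Ideal S) ((evalRing K n).comp φ)
          (kills I K φ hφ n) (x.val n) := rfl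

lemma extendHom_algebraMap
    (hφ : Ideal.map φ I ≤ Ideal.map (algebraMap T (AdicCompletion K T)) K) (s : S) :
    extendHom I K φ hφ (algebraMap S (AdicCompletion I S) s) = φ s :=
  AdicCompletion.ext fun n => by
    rw [extendHom_val, val_algebraMap, Ideal.Quotient.lift_mk]
    rfl

end QDworkAux

namespace QDwork

open QDworkAux AdicCompletion

variable (p : ℕ) [Fact p.Prime]

/-- `R = ℤ_p[[q−1]]`. -/
abbrev R : Type := PowerSeries ℤ_[p]

/-- `q = 1 + (q−1) ∈ R`. -/
def qq : R p := 1 + PowerSeries.X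

/-- The localization `R[λ][1/g]`. -/
abbrev LocA (g : Polynomial (R p)) : Type := Localization.Away g

/-- The ideal `(p, q−1)` of `R[λ][1/g]`. -/
def JLoc (g : Polynomial (R p)) : Ideal (LocA p g) :=
  Ideal.span {algebraMap (Polynomial (R p)) (LocA p g) (Polynomial.C (p : R p)),
    algebraMap (Polynomial (R p)) (LocA p g) (Polynomial.C (qq p - 1))}

/-- `R⟨λ, 1/g⟩`: the `(p,q−1)`-adic completion of `R[λ][1/g]`. -/
abbrev Tcomp (g : Polynomial (R p)) : Type := AdicCompletion (JLoc p g) (LocA p g)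

/-- The canonical (continuous) ring homomorphism `R[λ] → R⟨λ,1/g⟩`. -/
def ιT (g : Polynomial (R p)) : Polynomial (R p) →+* Tcomp p g :=
  (algebraMap (LocA p g) (Tcomp p g)).comp (algebraMap (Polynomial (R p)) (LocA p g))

/-- The ideal `(p,q−1)` of `R⟨λ,1/g⟩`. -/
def JT (g : Polynomial (R p)) : Ideal (Tcomp p g) :=
  Ideal.span {ιT p g (Polynomial.C (p : R p)), ιT p g (Polynomial.C (qq p - 1))}

set_option maxHeartbeats 2000000
set_option synthInstance.maxHeartbeats 200000

/-- If `g ≡ h^n mod (p,q−1)R[λ]` with `h^n ∉ (p,q−1)R[λ]` and `n > 0`, then the image of `g`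
in `R⟨λ,1/h⟩` is a unit, the image of `h` in `R⟨λ,1/g⟩` is a unit, and the induced continuous
`R[λ]`-algebra homomorphisms between `R⟨λ,1/g⟩` and `R⟨λ,1/h⟩` are mutually inverse ring
isomorphisms (continuity being expressed by preservation of the `(p,q−1)`-adic filtrations). -/
theorem completed_localizations_isomorphic (hp : p ≠ 2)
    (g h : Polynomial (R p)) (n : ℕ) (hn : 0 < n)
    (hcong : g - h ^ n ∈ (Ideal.span {Polynomial.C (p : R p), Polynomial.C (qq p - 1)} :
      Ideal (Polynomial (R p))))
    (hnot : h ^ n ∉ (Ideal.span {Polynomial.C (p : R p), Polynomial.C (qq p - 1)} :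
      Ideal (Polynomial (R p)))) :
    IsUnit (ιT p h g) ∧ IsUnit (ιT p g h) ∧
    ∃ e : Tcomp p g ≃+* Tcomp p h,
      (∀ x : Polynomial (R p), e (ιT p g x) = ιT p h x) ∧
      (∀ (k : ℕ) (t : Tcomp p g), t ∈ JT p g ^ k → e t ∈ JT p h ^ k) ∧
      (∀ (k : ℕ) (t : Tcomp p h), t ∈ JT p h ^ k → e.symm t ∈ JT p g ^ k) := by
  classical
  set J : Ideal (Polynomial (R p)) :=
    Ideal.span {Polynomial.C (p : R p), Polynomial.C (qq p - 1)} with hJ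
  -- the ideal (p,q-1) maps onto JLoc
  have f1 : ∀ c : Polynomial (R p),
      Ideal.map (algebraMap (Polynomial (R p)) (LocA p c)) J = JLoc p c := by
    intro c
    rw [hJ, Ideal.map_span, Set.image_pair]
    rfl
  -- image under ιT of elements of J has val 1 equal to 0
  have hval1 : ∀ (c x : Polynomial (R p)), x ∈ J →
      (ιT p c x).val 1 = 0 := by
    intro c x hx
    have hmem : algebraMap (Polynomial (R p)) (LocA p c) x ∈ (JLoc p c ^ 1 • ⊤ : Ideal (LocA p c)) := by
      rw [smul_top_pow, pow_one, ← f1 c]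
      exact Ideal.mem_map_of_mem _ hx
    have : (ιT p c x).val 1
        = Ideal.Quotient.mk (JLoc p c ^ 1 • ⊤ : Ideal (LocA p c))
            (algebraMap (Polynomial (R p)) (LocA p c) x) :=
      val_algebraMap (JLoc p c) _ 1
    rw [this, Ideal.Quotient.eq_zero_iff_mem]
    exact hmem
  -- `g` is a unit in the completion at `h`
  have huh : IsUnit ((ιT p h h).val 1) := by
    have h0 : IsUnit (algebraMap (Polynomial (R p)) (LocA p h) h) :=
      IsLocalization.Away.algebraMap_isUnit h
    exact (h0.map (algebraMap (LocA p h) (Tcomp p h))).map (evalRing (JLoc p h) 1)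
  have hunit1 : IsUnit (ιT p h g) := by
    apply isUnit_of_isUnit_val_one
    have hg : ιT p h g = ιT p h (h ^ n) + ιT p h (g - h ^ n) := by
      rw [← _root_.map_add]; congr 1; ring
    have e1 : (ιT p h g).val 1 = (ιT p h (h ^ n)).val 1 + (ιT p h (g - h ^ n)).val 1 := by
      rw [hg, val_add_apply]
    rw [e1, hval1 h (g - h ^ n) hcong, add_zero, _root_.map_pow]
    have e2 : ((ιT p h h) ^ n).val 1 = ((ιT p h h).val 1) ^ n :=
      _root_.map_pow (evalRing (JLoc p h) 1) (ιT p h h) n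
    rw [e2]
    exact huh.pow n
  -- `h` is a unit in the completion at `g`
  have hug : IsUnit ((ιT p g g).val 1) := by
    have h0 : IsUnit (algebraMap (Polynomial (R p)) (LocA p g) g) :=
      IsLocalization.Away.algebraMap_isUnit g
    exact (h0.map (algebraMap (LocA p g) (Tcomp p g))).map (evalRing (JLoc p g) 1)
  have hunit2 : IsUnit (ιT p g h) := by
    have hpowu : IsUnit (ιT p g h ^ n) := by
      rw [← _root_.map_pow]
      apply isUnit_of_isUnit_val_one
      have hrw : ιT p g (h ^ n) = ιT p g g - ιT p g (g - h ^ n) := by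
        rw [← _root_.map_sub]; congr 1; ring
      rw [hrw, val_sub_apply, hval1 g (g - h ^ n) hcong, sub_zero]
      exact hug
    exact (isUnit_pow_iff hn.ne').mp hpowu
  -- the induced maps between the localizations
  set φ : LocA p g →+* Tcomp p h := Localization.awayLift (ιT p h) g hunit1 with hφdef
  set ψ : LocA p h →+* Tcomp p g := Localization.awayLift (ιT p g) h hunit2 with hψdef
  have m2 : Ideal.map ((algebraMap (LocA p h) (Tcomp p h)).comp
        (algebraMap (Polynomial (R p)) (LocA p h))) J
      = Ideal.map (algebraMap (LocA p h) (Tcomp p h)) (JLoc p h) := by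
    rw [← Ideal.map_map, f1 h]
  have m2' : Ideal.map ((algebraMap (LocA p g) (Tcomp p g)).comp
        (algebraMap (Polynomial (R p)) (LocA p g))) J
      = Ideal.map (algebraMap (LocA p g) (Tcomp p g)) (JLoc p g) := by
    rw [← Ideal.map_map, f1 g]
  have hφle : Ideal.map φ (JLoc p g)
      ≤ Ideal.map (algebraMap (LocA p h) (Tcomp p h)) (JLoc p h) := by
    have m1 : Ideal.map φ (JLoc p g)
        = Ideal.map (φ.comp (algebraMap (Polynomial (R p)) (LocA p g))) J := by
      rw [← f1 g, Ideal.map_map]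
    have m3 : φ.comp (algebraMap (Polynomial (R p)) (LocA p g)) = ιT p h := by
      rw [hφdef]
      exact IsLocalization.Away.lift_comp (x := g) hunit1
    rw [m1, m3, ← m2]
    exact le_of_eq rfl
  have hψle : Ideal.map ψ (JLoc p h)
      ≤ Ideal.map (algebraMap (LocA p g) (Tcomp p g)) (JLoc p g) := by
    have m1 : Ideal.map ψ (JLoc p h)
        = Ideal.map (ψ.comp (algebraMap (Polynomial (R p)) (LocA p h))) J := by
      rw [← f1 h, Ideal.map_map]
    have m3 : ψ.comp (algebraMap (Polynomial (R p)) (LocA p h)) = ιT p g := by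
      rw [hψdef]
      exact IsLocalization.Away.lift_comp (x := h) hunit2
    rw [m1, m3, ← m2']
    exact le_of_eq rfl
  set Φ : Tcomp p g →+* Tcomp p h := extendHom (JLoc p g) (JLoc p h) φ hφle with hΦdef
  set Ψ : Tcomp p h →+* Tcomp p g := extendHom (JLoc p h) (JLoc p g) ψ hψle with hΨdef
  have hΦι : ∀ x : Polynomial (R p), Φ (ιT p g x) = ιT p h x := by
    intro x
    have h1 := extendHom_algebraMap (JLoc p g) (JLoc p h) φ hφle
      (algebraMap (Polynomial (R p)) (LocA p g) x)
    have h2 : ιT p g x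
        = algebraMap (LocA p g) (Tcomp p g) (algebraMap (Polynomial (R p)) (LocA p g) x) := rfl
    rw [h2, h1]
    exact IsLocalization.Away.lift_eq (x := g) hunit1 x
  have hΨι : ∀ x : Polynomial (R p), Ψ (ιT p h x) = ιT p g x := by
    intro x
    have h1 := extendHom_algebraMap (JLoc p h) (JLoc p g) ψ hψle
      (algebraMap (Polynomial (R p)) (LocA p h) x)
    have h2 : ιT p h x
        = algebraMap (LocA p h) (Tcomp p h) (algebraMap (Polynomial (R p)) (LocA p h) x) := rfl
    rw [h2, h1]
    exact IsLocalization.Away.lift_eq (x := h) hunit2 x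
  -- round trips are the identity
  have hround1 : ∀ m : ℕ,
      (Ideal.Quotient.lift (JLoc p h ^ m • ⊤ : Ideal (LocA p h))
          ((evalRing (JLoc p g) m).comp ψ) (kills _ _ ψ hψle m)).comp
        ((Ideal.Quotient.lift (JLoc p g ^ m • ⊤ : Ideal (LocA p g))
          ((evalRing (JLoc p h) m).comp φ) (kills _ _ φ hφle m)).comp
            (Ideal.Quotient.mk (JLoc p g ^ m • ⊤ : Ideal (LocA p g))))
      = (Ideal.Quotient.mk (JLoc p g ^ m • ⊤ : Ideal (LocA p g))) := by
    intro m
    apply IsLocalization.ringHom_ext (Submonoid.powers g)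
    apply RingHom.ext
    intro x
    simp only [RingHom.comp_apply, Ideal.Quotient.lift_mk]
    have e1 : evalRing (JLoc p h) m (φ (algebraMap (Polynomial (R p)) (LocA p g) x))
        = Ideal.Quotient.mk (JLoc p h ^ m • ⊤ : Ideal (LocA p h))
            (algebraMap (Polynomial (R p)) (LocA p h) x) := by
      show (φ (algebraMap (Polynomial (R p)) (LocA p g) x)).val m = _
      rw [hφdef, IsLocalization.Away.lift_eq (x := g) hunit1 x]
      exact val_algebraMap (JLoc p h) _ m
    rw [e1, Ideal.Quotient.lift_mk]
    show (ψ (algebraMap (Polynomial (R p)) (LocA p h) x)).val m = _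
    rw [hψdef, IsLocalization.Away.lift_eq (x := h) hunit2 x]
    exact val_algebraMap (JLoc p g) _ m
  have hround2 : ∀ m : ℕ,
      (Ideal.Quotient.lift (JLoc p g ^ m • ⊤ : Ideal (LocA p g))
          ((evalRing (JLoc p h) m).comp φ) (kills _ _ φ hφle m)).comp
        ((Ideal.Quotient.lift (JLoc p h ^ m • ⊤ : Ideal (LocA p h))
          ((evalRing (JLoc p g) m).comp ψ) (kills _ _ ψ hψle m)).comp
            (Ideal.Quotient.mk (JLoc p h ^ m • ⊤ : Ideal (LocA p h))))
      = (Ideal.Quotient.mk (JLoc p h ^ m • ⊤ : Ideal (LocA p h))) := by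
    intro m
    apply IsLocalization.ringHom_ext (Submonoid.powers h)
    apply RingHom.ext
    intro x
    simp only [RingHom.comp_apply, Ideal.Quotient.lift_mk]
    have e1 : evalRing (JLoc p g) m (ψ (algebraMap (Polynomial (R p)) (LocA p h) x))
        = Ideal.Quotient.mk (JLoc p g ^ m • ⊤ : Ideal (LocA p g))
            (algebraMap (Polynomial (R p)) (LocA p g) x) := by
      show (ψ (algebraMap (Polynomial (R p)) (LocA p h) x)).val m = _
      rw [hψdef, IsLocalization.Away.lift_eq (x := h) hunit2 x]
      exact val_algebraMap (JLoc p g) _ m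
    rw [e1, Ideal.Quotient.lift_mk]
    show (φ (algebraMap (Polynomial (R p)) (LocA p g) x)).val m = _
    rw [hφdef, IsLocalization.Away.lift_eq (x := g) hunit1 x]
    exact val_algebraMap (JLoc p h) _ m
  have hcomp1 : ∀ t : Tcomp p g, Ψ (Φ t) = t := by
    intro t
    apply AdicCompletion.ext
    intro m
    obtain ⟨s, hs⟩ := Ideal.Quotient.mk_surjective (t.val m)
    rw [hΨdef, hΦdef, extendHom_val, extendHom_val, ← hs]
    exact RingHom.congr_fun (hround1 m) s
  have hcomp2 : ∀ t : Tcomp p h, Φ (Ψ t) = t := by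
    intro t
    apply AdicCompletion.ext
    intro m
    obtain ⟨s, hs⟩ := Ideal.Quotient.mk_surjective (t.val m)
    rw [hΦdef, hΨdef, extendHom_val, extendHom_val, ← hs]
    exact RingHom.congr_fun (hround2 m) s
  set e : Tcomp p g ≃+* Tcomp p h :=
    { toFun := Φ
      invFun := Ψ
      left_inv := hcomp1
      right_inv := hcomp2
      map_mul' := Φ.map_mul
      map_add' := Φ.map_add } with hedef
  have hJTmap : Ideal.map Φ (JT p g) ≤ JT p h := by
    unfold JT
    rw [Ideal.map_span, Set.image_pair, hΦι (Polynomial.C (p : R p)),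
      hΦι (Polynomial.C (qq p - 1))]
  have hJTmap' : Ideal.map Ψ (JT p h) ≤ JT p g := by
    unfold JT
    rw [Ideal.map_span, Set.image_pair, hΨι (Polynomial.C (p : R p)),
      hΨι (Polynomial.C (qq p - 1))]
  refine ⟨hunit1, hunit2, e, hΦι, ?_, ?_⟩
  · intro k t ht
    have h1 : Φ t ∈ Ideal.map Φ (JT p g ^ k) := Ideal.mem_map_of_mem _ ht
    rw [Ideal.map_pow] at h1
    exact Ideal.pow_right_mono hJTmap k h1
  · intro k t ht
    have h1 : Ψ t ∈ Ideal.map Ψ (JT p h ^ k) := Ideal.mem_map_of_mem _ ht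
    rw [Ideal.map_pow] at h1
    exact Ideal.pow_right_mono hJTmap' k h1

end QDwork
end
end

section
/- The power series F := Σ_{n≥0} a_n λ^n ∈ Q[[λ]] satisfies the q-hypergeometric equation: L[F] = qλ(1−qλ)·d_q²F + (1−αλ)·d_qF − [1/2]_q²·F = 0. -/
/- Setting (following Dwork-type q-congruences / q-hypergeometric papers):
`p` is an odd prime, `R = ℤ_p[[q−1]]` is implemented as `PowerSeries ℤ_[p]`, the power-series
variable `PowerSeries.X` standing for `q − 1`. -/

noncomputable section
open PowerSeries
namespace QDwork

variable (p : ℕ) [Fact p.Prime]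

/-- `q^a = Σ_{i≥0} binom(a,i)(q−1)^i ∈ R` for `a ∈ ℤ_p`, using the p-adically interpolated
binomial coefficients `Ring.choose` (`ℤ_p` is a binomial ring). -/
def qpow (a : ℤ_[p]) : R p := PowerSeries.mk fun i => Ring.choose a i

/-- The q-number `[a]_q = (q^a−1)/(q−1) = Σ_{i≥1} binom(a,i)(q−1)^{i−1} ∈ R` for `a ∈ ℤ_p`. -/
def qnum (a : ℤ_[p]) : R p := PowerSeries.mk fun i => Ring.choose a (i + 1)

/-- The q-number `[n]_q = 1 + q + ⋯ + q^{n−1} ∈ R` of a natural number `n`. -/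
def qnat (n : ℕ) : R p := ∑ i ∈ Finset.range n, qq p ^ i

/-- `1/2 ∈ ℤ_p` (recall `p` is odd, so `2` is a unit of `ℤ_p`). -/
def half : ℤ_[p] := Ring.inverse 2

/-- The q-derivative `d_q = (γ−1)/((q−1)λ)` on `A[[λ]]`, for a commutative ring `A` with a
distinguished element `q`; it is given on coefficients by `d_q(Σ aₙλⁿ) = Σ [n]_q aₙ λ^{n−1}`,
and is characterized by `dq_spec` below. -/
def dq {A : Type} [CommRing A] (q : A) (f : PowerSeries A) : PowerSeries A :=
  PowerSeries.mk fun n => (∑ i ∈ Finset.range (n + 1), q ^ i) * PowerSeries.coeff (n + 1) f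

/-- `d_q` is indeed `(γ−1)/((q−1)λ)`, where `γ(f)(λ) = f(qλ)` is `PowerSeries.rescale q`:
we have `(q−1)·λ·(d_q f) = γ(f) − f`. -/
theorem dq_spec {A : Type} [CommRing A] (q : A) (f : PowerSeries A) :
    PowerSeries.C (q - 1) * PowerSeries.X * dq q f = PowerSeries.rescale q f - f := by
  ext n
  rw [mul_comm (PowerSeries.C (q - 1)) PowerSeries.X, mul_assoc]
  rcases n with _ | n
  · have h0 := PowerSeries.coeff_rescale f q 0
    simp only [pow_zero, one_mul, PowerSeries.coeff_zero_eq_constantCoeff] at h0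
    simp only [PowerSeries.coeff_zero_eq_constantCoeff, map_mul, map_sub, constantCoeff_X,
      zero_mul, h0, sub_self]
  · rw [PowerSeries.coeff_succ_X_mul, PowerSeries.coeff_C_mul, dq, PowerSeries.coeff_mk,
      map_sub, PowerSeries.coeff_rescale]
    rw [← mul_assoc, mul_comm (q - 1), geom_sum_mul, sub_one_mul]

/-- `Q = Frac(R)`. -/
abbrev Q : Type := FractionRing (R p)

/-- The canonical injection `R → Q`. -/
def ι : R p →+* Q p := algebraMap (R p) (Q p)

/-- `q ∈ Q`. -/
def qQ : Q p := ι p (qq p)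

/-- `[a]_q` viewed in `Q`, for `a ∈ ℤ_p`. -/
def qnumQ (a : ℤ_[p]) : Q p := ι p (qnum p a)

/-- `[n]_q` viewed in `Q`, for a natural number `n`. -/
def qnatQ (n : ℕ) : Q p := ι p (qnat p n)

/-- `a_n = ∏_{i=0}^{n−1} ([i+1/2]_q/[i+1]_q)² ∈ Q`, with `a_0 = 1`. -/
def aCoef (n : ℕ) : Q p :=
  ∏ i ∈ Finset.range n, (qnumQ p ((i : ℤ_[p]) + half p) / qnumQ p ((i : ℤ_[p]) + 1)) ^ 2

/-- `F = Σ_{n≥0} a_n λ^n ∈ Q[[λ]]`. -/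
def Fq : PowerSeries (Q p) := PowerSeries.mk fun n => aCoef p n

/-- `α = 1 + [2]_q − 2[1/2]_q ∈ Q`. -/
def alphaQ : Q p := 1 + qnumQ p 2 - 2 * qnumQ p (half p)

/-- The q-hypergeometric operator
`L[f] = qλ(1−qλ)·d_q²f + (1−αλ)·d_qf − [1/2]_q²·f` on `Q[[λ]]`. -/
def Lq (f : PowerSeries (Q p)) : PowerSeries (Q p) :=
  PowerSeries.C (qQ p) * PowerSeries.X *
      (1 - PowerSeries.C (qQ p) * PowerSeries.X) * dq (qQ p) (dq (qQ p) f) +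
    (1 - PowerSeries.C (alphaQ p) * PowerSeries.X) * dq (qQ p) f -
    PowerSeries.C (qnumQ p (half p) ^ 2) * f


/-! ### Auxiliary lemmas -/

lemma qpow_add (a b : ℤ_[p]) : qpow p (a + b) = qpow p a * qpow p b := by
  ext n
  rw [qpow, coeff_mk, PowerSeries.coeff_mul, Ring.add_choose_eq n (Commute.all a b)]
  exact Finset.sum_congr rfl fun ij _ => by simp [qpow, coeff_mk]

lemma qpow_eq (a : ℤ_[p]) : qpow p a = 1 + PowerSeries.X * qnum p a := by
  ext n
  cases n with
  | zero =>
      simp [qpow, qnum, coeff_mk, Ring.choose_zero_right]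
  | succ n =>
      simp [qpow, qnum, coeff_mk, PowerSeries.coeff_succ_X_mul, PowerSeries.coeff_one]

lemma qpow_one : qpow p 1 = qq p := by
  ext n
  rw [qpow, coeff_mk, show (1 : ℤ_[p]) = ((1 : ℕ) : ℤ_[p]) from (Nat.cast_one).symm,
    Ring.choose_natCast]
  rcases n with _ | _ | n
  · simp [qq]
  · simp [qq]
  · rw [Nat.choose_eq_zero_of_lt (by omega)]
    simp [qq, PowerSeries.coeff_one, PowerSeries.coeff_X]

lemma qpow_natCast (n : ℕ) : qpow p (n : ℤ_[p]) = qq p ^ n := by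
  induction n with
  | zero =>
      ext k
      rw [Nat.cast_zero, show (0 : ℤ_[p]) = ((0 : ℕ) : ℤ_[p]) from (Nat.cast_zero).symm, qpow,
        coeff_mk, Ring.choose_natCast, pow_zero]
      cases k <;> simp [PowerSeries.coeff_one]
  | succ n ih =>
      rw [Nat.cast_succ, qpow_add, ih, qpow_one, pow_succ]

lemma qnum_spec (a : ℤ_[p]) : PowerSeries.X * qnum p a = qpow p a - 1 := by
  rw [qpow_eq]; ring

lemma X_cancel {f g : R p} (h : PowerSeries.X * f = PowerSeries.X * g) : f = g :=
  mul_left_cancel₀ PowerSeries.X_ne_zero h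

lemma qnat_spec (n : ℕ) : PowerSeries.X * qnat p n = qq p ^ n - 1 := by
  have hX : (PowerSeries.X : R p) = qq p - 1 := by rw [qq]; ring
  rw [qnat, hX, mul_comm, geom_sum_mul]

lemma qnum_natCast (n : ℕ) : qnum p (n : ℤ_[p]) = qnat p n := by
  apply X_cancel p
  rw [qnum_spec, qnat_spec, qpow_natCast]

lemma qnum_nat_add (n : ℕ) (a : ℤ_[p]) :
    qnum p ((n : ℤ_[p]) + a) = qnat p n + qq p ^ n * qnum p a := by
  apply X_cancel p
  rw [qnum_spec, qpow_add, qpow_natCast, qpow_eq p a]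
  linear_combination - qnat_spec p n

lemma isUnit_two (hp : p ≠ 2) : IsUnit (2 : ℤ_[p]) := by
  rw [PadicInt.isUnit_iff]
  have h1 : ‖(2 : ℤ_[p])‖ ≤ 1 := PadicInt.norm_le_one _
  by_contra h
  have h2 : ‖(2 : ℤ_[p])‖ < 1 := lt_of_le_of_ne h1 h
  rw [show ((2 : ℤ_[p])) = ((2 : ℤ) : ℤ_[p]) by norm_cast,
    PadicInt.norm_int_lt_one_iff_dvd] at h2
  have hdvd : p ∣ 2 := by exact_mod_cast h2
  exact hp ((Nat.prime_dvd_prime_iff_eq (Fact.out) Nat.prime_two).mp hdvd)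

lemma two_mul_half (hp : p ≠ 2) : (2 : ℤ_[p]) * half p = 1 :=
  Ring.mul_inverse_cancel _ (isUnit_two p hp)

lemma half_add_half (hp : p ≠ 2) : half p + half p = 1 := by
  rw [← two_mul]; exact two_mul_half p hp

lemma hB (hp : p ≠ 2) :
    2 * qnum p (half p) + PowerSeries.X * qnum p (half p) ^ 2 = 1 := by
  apply X_cancel p
  have h1 : qpow p (half p) * qpow p (half p) = qq p := by
    rw [← qpow_add, half_add_half p hp, qpow_one]
  rw [qpow_eq, qq] at h1
  linear_combination h1

lemma iota_X : ι p PowerSeries.X = qQ p - 1 := by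
  rw [qQ, show (PowerSeries.X : R p) = qq p - 1 from by rw [qq]; ring, map_sub, map_one]

lemma iota_qq_pow (n : ℕ) : ι p (qq p ^ n) = qQ p ^ n := by rw [map_pow, qQ]

lemma qnatQ_eq (n : ℕ) : qnatQ p n = ∑ i ∈ Finset.range n, qQ p ^ i := by
  rw [qnatQ, qnat, map_sum]
  exact Finset.sum_congr rfl fun i _ => iota_qq_pow p i

lemma qnatQ_succ (n : ℕ) : qnatQ p (n + 1) = 1 + qQ p * qnatQ p n := by
  rw [qnatQ_eq, qnatQ_eq, geom_sum_succ]
  ring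

lemma qnatQ_zero : qnatQ p 0 = 0 := by rw [qnatQ_eq]; simp

lemma qnatQ_one : qnatQ p 1 = 1 := by rw [qnatQ_eq]; simp

lemma qnatQ_ne_zero (n : ℕ) : qnatQ p (n + 1) ≠ 0 := by
  intro h
  rw [qnatQ, ι, IsFractionRing.to_map_eq_zero_iff] at h
  have hc := congrArg (PowerSeries.constantCoeff) h
  rw [qnat] at hc
  simp only [map_sum, map_pow, qq, map_add, map_one, PowerSeries.constantCoeff_X, add_zero,
    one_pow, Finset.sum_const, Finset.card_range, nsmul_eq_mul, mul_one, map_zero] at hc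
  exact Nat.cast_ne_zero.mpr (Nat.succ_ne_zero n) hc

lemma qnumQ_nat_succ (n : ℕ) : qnumQ p ((n : ℤ_[p]) + 1) = qnatQ p (n + 1) := by
  rw [qnumQ, show ((n : ℤ_[p]) + 1) = ((n + 1 : ℕ) : ℤ_[p]) by push_cast; ring,
    qnum_natCast, qnatQ]

lemma qnumQ_nat_add_half (n : ℕ) :
    qnumQ p ((n : ℤ_[p]) + half p) = qnatQ p n + qQ p ^ n * qnumQ p (half p) := by
  rw [qnumQ, qnum_nat_add, map_add, map_mul, iota_qq_pow, qnatQ, qnumQ]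

lemma qQ_pow_eq (n : ℕ) : qQ p ^ n = 1 + (qQ p - 1) * qnatQ p n := by
  have h := congrArg (ι p) (qnat_spec p n)
  rw [map_mul, map_sub, map_one, iota_X, iota_qq_pow, ← qnatQ] at h
  linear_combination - h

lemma hBQ (hp : p ≠ 2) :
    2 * qnumQ p (half p) + (qQ p - 1) * qnumQ p (half p) ^ 2 = 1 := by
  have h := congrArg (ι p) (hB p hp)
  rw [map_add, map_mul, map_mul, map_pow, map_one, iota_X, map_ofNat, ← qnumQ] at h
  exact h

lemma alphaQ_eq : alphaQ p = 2 + qQ p - 2 * qnumQ p (half p) := by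
  have h2 : qnumQ p 2 = 1 + qQ p := by
    rw [qnumQ, show (2 : ℤ_[p]) = ((2 : ℕ) : ℤ_[p]) by norm_cast, qnum_natCast, qnat,
      Finset.sum_range_succ, Finset.sum_range_one, pow_zero, pow_one, map_add, map_one, qQ]
  rw [alphaQ, h2]
  ring

lemma aCoef_zero : aCoef p 0 = 1 := by
  rw [aCoef, Finset.range_zero, Finset.prod_empty]

lemma aCoef_succ (n : ℕ) :
    aCoef p (n + 1) * qnatQ p (n + 1) ^ 2 = qnumQ p ((n : ℤ_[p]) + half p) ^ 2 * aCoef p n := by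
  rw [aCoef, Finset.prod_range_succ, ← aCoef, div_pow, qnumQ_nat_succ, mul_assoc,
    div_mul_cancel₀ _ (pow_ne_zero 2 (qnatQ_ne_zero p n))]
  ring

lemma key_id (hp : p ≠ 2) (n : ℕ) :
    qnumQ p (((n + 1 : ℕ) : ℤ_[p]) + half p) ^ 2
      = qQ p ^ 2 * qnatQ p n * qnatQ p (n + 1) + alphaQ p * qnatQ p (n + 1)
        + qnumQ p (half p) ^ 2 := by
  rw [qnumQ_nat_add_half, qQ_pow_eq, alphaQ_eq]
  linear_combination ((qQ p - 1) * qnatQ p (n + 1) ^ 2 + 2 * qnatQ p (n + 1)) * hBQ p hp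
    + qQ p * qnatQ p (n + 1) * qnatQ_succ p n

lemma coeff_id (hp : p ≠ 2) (n : ℕ) :
    qQ p * qnatQ p (n + 1) * qnatQ p (n + 2) * aCoef p (n + 2)
        + qnatQ p (n + 2) * aCoef p (n + 2)
      = qQ p * qQ p * (qnatQ p n * qnatQ p (n + 1) * aCoef p (n + 1))
        + alphaQ p * (qnatQ p (n + 1) * aCoef p (n + 1))
        + qnumQ p (half p) ^ 2 * aCoef p (n + 1) := by
  linear_combination aCoef p (n + 1) * key_id p hp n + aCoef_succ p (n + 1)
    - qnatQ p (n + 2) * aCoef p (n + 2) * qnatQ_succ p (n + 1)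

lemma coeff0_id : qnatQ p 1 * aCoef p 1 = qnumQ p (half p) ^ 2 := by
  have h := aCoef_succ p 0
  simp only [qnatQ_one, Nat.cast_zero, zero_add, aCoef_zero, mul_one, one_pow] at h
  rw [qnatQ_one, one_mul, h]

/-- `F = Σ_{n≥0} a_n λ^n` satisfies the q-hypergeometric equation `L[F] = 0`. -/
theorem qhypergeometric_F (hp : p ≠ 2) : Lq p (Fq p) = 0 := by
  have hD1 : ∀ k, PowerSeries.coeff k (dq (qQ p) (Fq p))
      = qnatQ p (k + 1) * aCoef p (k + 1) := by
    intro k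
    rw [dq, coeff_mk, Fq, coeff_mk, ← qnatQ_eq]
  have hD2 : ∀ k, PowerSeries.coeff k (dq (qQ p) (dq (qQ p) (Fq p)))
      = qnatQ p (k + 1) * (qnatQ p (k + 2) * aCoef p (k + 2)) := by
    intro k
    rw [dq, coeff_mk, hD1, ← qnatQ_eq]
  have hexp : Lq p (Fq p) =
      PowerSeries.C (qQ p) * (PowerSeries.X * dq (qQ p) (dq (qQ p) (Fq p)))
      - PowerSeries.C (qQ p) * (PowerSeries.C (qQ p) *
          (PowerSeries.X * (PowerSeries.X * dq (qQ p) (dq (qQ p) (Fq p)))))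
      + dq (qQ p) (Fq p)
      - PowerSeries.C (alphaQ p) * (PowerSeries.X * dq (qQ p) (Fq p))
      - PowerSeries.C (qnumQ p (half p) ^ 2) * Fq p := by
    rw [Lq]; ring
  ext n
  rw [hexp, map_sub, map_sub, map_add, map_sub, PowerSeries.coeff_C_mul,
    PowerSeries.coeff_C_mul, PowerSeries.coeff_C_mul, PowerSeries.coeff_C_mul,
    PowerSeries.coeff_C_mul, map_zero]
  rcases n with _ | _ | n
  · rw [PowerSeries.coeff_zero_X_mul, PowerSeries.coeff_zero_X_mul,
      PowerSeries.coeff_zero_X_mul, hD1, Fq, coeff_mk, aCoef_zero, mul_one]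
    simp only [Nat.reduceAdd]
    linear_combination coeff0_id p
  · rw [PowerSeries.coeff_succ_X_mul, PowerSeries.coeff_succ_X_mul,
      PowerSeries.coeff_succ_X_mul, PowerSeries.coeff_zero_X_mul, hD2, hD1, hD1, Fq, coeff_mk]
    simp only [Nat.reduceAdd]
    linear_combination coeff_id p hp 0
      + qQ p * qQ p * qnatQ p 1 * aCoef p 1 * qnatQ_zero p
  · rw [PowerSeries.coeff_succ_X_mul, PowerSeries.coeff_succ_X_mul,
      PowerSeries.coeff_succ_X_mul, PowerSeries.coeff_succ_X_mul, hD2, hD2, hD1, hD1,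
      Fq, coeff_mk]
    have H := coeff_id p hp (n + 1)
    simp only [Nat.add_assoc, Nat.reduceAdd] at H ⊢
    linear_combination H

end QDwork
end
end
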